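/- For every nonzero rational number u, the point P = (-4(4u⁴ + 1), 16u(4u⁴ + 1)) is a rational point on the elliptic curve Y² = X(X + 32u⁴ + 8)(X + 16u⁴ - 16u² + 4), and P has infinite order in the group of rational points of this curve. -/

import Mathlib

private lemma zmod16_aux : ∀ a b c : ZMod 16, c^2 ≠ 2*(4*a^4+(2*b+1)^4) := by decide

private lemma zmod8_aux : ∀ a b c : ZMod 8, b^4 ≠ (2*a+1)^4 + (2*c+1)^2 := by decide

/-- no integer solutions to `z² = 2(4p⁴+q⁴)` with `(p,q) ≠ (0,0)`. -/
private lemma Z1 : ∀ N : ℕ, ∀ z p q : ℤ, z.natAbs ≤ N → (p ≠ 0 ∨ q ≠ 0) →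
    z^2 ≠ 2*(4*p^4+q^4) := by
  intro N
  induction N using Nat.strong_induction_on with
  | _ N ih =>
    intro z p q hzN hpq h
    rcases Int.even_or_odd q with ⟨q1, hq1⟩ | ⟨q1, hq1⟩
    · -- q even; q = q1 + q1
      have hz0 : z ≠ 0 := by
        rintro rfl
        have hp4 : (0:ℤ) < 4*p^4+q^4 := by
          rcases hpq with hp | hq
          · have : (0:ℤ) < p^4 := by positivity
            nlinarith [sq_nonneg (q^2)]
          · have : (0:ℤ) < q^4 := by positivity
            nlinarith [sq_nonneg (p^2)]
        nlinarith
      have hze : Even z := by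
        have hzev : Even (z^2) := by
          refine ⟨4*p^4+q^4, by linarith⟩
        exact (Int.even_pow.mp hzev).1
      obtain ⟨z1, hz1⟩ := hze
      have h' : z1^2 = 2*(4*q1^4+p^4) := by
        apply mul_left_cancel₀ (show (4:ℤ) ≠ 0 by norm_num)
        subst hz1 hq1; ring_nf; ring_nf at h; linarith
      have hlt : z1.natAbs < N := by
        have : z1.natAbs < z.natAbs := by omega
        omega
      exact ih z1.natAbs hlt z1 q1 p le_rfl (by omega) h'
    · -- q odd : contradiction mod 16
      have h16 : ((z : ZMod 16))^2 = 2*(4*(p:ZMod 16)^4+(2*(q1:ZMod 16)+1)^4) := by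
        have := congrArg (fun n : ℤ => (n : ZMod 16)) h
        push_cast [hq1] at this
        exact this
      exact zmod16_aux _ _ _ h16

private lemma sq_eq_sq_cases {x y : ℤ} (h : x^2 = y^2) : x = y ∨ x = -y := by
  have h' : (x - y) * (x + y) = 0 := by linear_combination h
  rcases mul_eq_zero.mp h' with h'' | h''
  · left; linarith
  · right; linarith

private lemma pos_sq_of_coprime {a b c : ℤ} (h : IsCoprime a b) (heq : a * b = c ^ 2)
    (ha : 0 < a) : ∃ a0, 0 ≤ a0 ∧ a = a0 ^ 2 := by
  obtain ⟨a0, h0 | h0⟩ := Int.sq_of_isCoprime h heq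
  · exact ⟨|a0|, abs_nonneg _, by rw [h0, sq_abs]⟩
  · exfalso; nlinarith [sq_nonneg a0]

private lemma pos_pow4_of_coprime {a b c : ℤ} (h : IsCoprime a b) (heq : a * b = c ^ 4)
    (ha : 0 < a) (hb : 0 < b) : ∃ a0, a = a0 ^ 4 := by
  obtain ⟨a2, _, ha2⟩ := pos_sq_of_coprime h (show a * b = (c^2)^2 by rw [heq]; ring) ha
  obtain ⟨b2, _, hb2⟩ := pos_sq_of_coprime h.symm
    (show b * a = (c^2)^2 by rw [mul_comm, heq]; ring) hb
  have hco2 : IsCoprime a2 b2 := by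
    have h' := h
    rw [ha2, hb2] at h'
    exact (IsCoprime.pow_left_iff two_pos).mp ((IsCoprime.pow_right_iff two_pos).mp h')
  have hprod : (a2*b2)^2 = (c^2)^2 := by
    rw [ha2, hb2] at heq; linear_combination heq
  rcases sq_eq_sq_cases hprod with hpm | hpm
  · obtain ⟨a0, h0 | h0⟩ := Int.sq_of_isCoprime hco2 hpm
    · exact ⟨a0, by rw [ha2, h0]; ring⟩
    · exact ⟨a0, by rw [ha2, h0]; ring⟩
  · obtain ⟨a0, h0 | h0⟩ := Int.sq_of_isCoprime hco2.neg_left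
      (show (-a2) * b2 = c^2 by linarith)
    · exact ⟨a0, by rw [ha2, show a2 = -(a0^2) by linarith]; ring⟩
    · exact ⟨a0, by rw [ha2, show a2 = a0^2 by linarith]; ring⟩

private lemma Z2 : ∀ N : ℕ, ∀ z p q : ℤ, z.natAbs ≤ N → p ≠ 0 → q ≠ 0 →
    q^4 + 4*p^4 ≠ z^2 := by
  intro N
  induction N using Nat.strong_induction_on with
  | _ N ih =>
    intro z p q hzN hp hq h
    have hz0 : z ≠ 0 := by
      rintro rfl
      have h1 : (0:ℤ) < q^4 := by positivity
      have h2 : (0:ℤ) < p^4 := by positivity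
      nlinarith
    set w : ℤ := |z| with hw
    have hw2 : q^4 + 4*p^4 = w^2 := by rw [hw, sq_abs]; exact h
    have hwpos : 0 < w := abs_pos.mpr hz0
    have hwabs : w.natAbs = z.natAbs := by simp [hw, Int.natAbs_abs]
    by_cases hd : Int.gcd p q = 1
    · -- coprime case
      have hco : IsCoprime p q := Int.isCoprime_iff_gcd_eq_one.mpr hd
      rcases Int.even_or_odd q with ⟨q1, hq1⟩ | ⟨q1, hq1⟩
      · -- q even
        have hq1ne : q1 ≠ 0 := by omega
        have hwe : Even w := by
          have he : Even (w^2) := ⟨8*q1^4 + 2*p^4, by rw [← hw2, hq1]; ring⟩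
          exact (Int.even_pow.mp he).1
        obtain ⟨w1, hw1⟩ := hwe
        have h' : p^4 + 4*q1^4 = w1^2 := by
          apply mul_left_cancel₀ (show (4:ℤ) ≠ 0 by norm_num)
          rw [hq1, hw1] at hw2; ring_nf; ring_nf at hw2; linarith
        have hlt : w1.natAbs < N := by omega
        exact ih w1.natAbs hlt w1 q1 p le_rfl hq1ne hp h'
      · -- q odd: main descent step
        have hwodd : Odd w := by
          have hodd : Odd (w^2) := by
            refine ⟨8*q1^4+16*q1^3+12*q1^2+4*q1 + 2*p^4, ?_⟩
            rw [← hw2, hq1]; ring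
          rcases Int.even_or_odd w with hev | hodd'
          · exfalso
            obtain ⟨r, hr⟩ := hev
            obtain ⟨s, hs⟩ := hodd
            have h4 : 4*(r*r) = 2*s+1 := by rw [hr] at hs; linear_combination hs
            set t := r*r with ht
            omega
          · exact hodd'
        set Q : ℤ := q^2 with hQ
        have hQodd : ∃ c, Q = 2*c+1 := ⟨2*q1^2+2*q1, by rw [hQ, hq1]; ring⟩
        obtain ⟨qc, hqc⟩ := hQodd
        obtain ⟨wc, hwc⟩ := hwodd
        obtain ⟨A, hA⟩ : ∃ A, w - Q = 2*A := ⟨wc - qc, by omega⟩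
        set B : ℤ := A + Q with hB
        have hwAB : w = A + B := by omega
        have hABp : A * B = p^4 := by
          apply mul_left_cancel₀ (show (4:ℤ) ≠ 0 by norm_num)
          have h2B : 2*B = w + Q := by omega
          calc 4*(A*B) = (2*A)*(2*B) := by ring
          _ = (w - Q)*(w + Q) := by rw [← hA, h2B]
          _ = w^2 - Q^2 := by ring
          _ = 4*(p^4) := by rw [hQ]; linear_combination -hw2
        have hApos : 0 < A := by
          have hq2w : Q < w := by
            rcases le_or_gt w Q with hle | hlt
            · exfalso
              have hQ0 : 0 ≤ Q := by rw [hQ]; positivity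
              have : w^2 ≤ Q^2 := by nlinarith
              have hp4 : (0:ℤ) < p^4 := by positivity
              rw [hQ] at this; nlinarith
            · exact hlt
          omega
        have hBpos : 0 < B := by
          have : 0 ≤ Q := by rw [hQ]; positivity
          omega
        have hcoAB : IsCoprime A B := by
          rw [Int.isCoprime_iff_gcd_eq_one]
          by_contra hg
          have hr := Nat.minFac_prime hg
          set r := (Int.gcd A B).minFac with hrdef
          have hrA : (r:ℤ) ∣ A :=
            dvd_trans (Int.natCast_dvd_natCast.mpr (Nat.minFac_dvd _)) (Int.gcd_dvd_left _ _)
          have hrB : (r:ℤ) ∣ B :=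
            dvd_trans (Int.natCast_dvd_natCast.mpr (Nat.minFac_dvd _)) (Int.gcd_dvd_right _ _)
          have hrp : Prime (r:ℤ) := Int.prime_iff_natAbs_prime.mpr (by simpa using hr)
          have hrdp : (r:ℤ) ∣ p := hrp.dvd_of_dvd_pow
            (show (r:ℤ) ∣ p^4 by rw [← hABp]; exact hrA.mul_right B)
          have hrdq : (r:ℤ) ∣ q := by
            apply hrp.dvd_of_dvd_pow (n := 2)
            have hBA : B - A = Q := by omega
            rw [hQ] at hBA
            exact hBA ▸ dvd_sub hrB hrA
          exact hrp.not_unit (hco.isUnit_of_dvd' hrdp hrdq)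
        obtain ⟨a, hA4⟩ := pos_pow4_of_coprime hcoAB (by rw [hABp]) hApos hBpos
        obtain ⟨b, hB4⟩ := pos_pow4_of_coprime hcoAB.symm (by rw [mul_comm, hABp]) hBpos hApos
        have hane : a ≠ 0 := by rintro rfl; simp at hA4; omega
        have hbne : b ≠ 0 := by rintro rfl; simp at hB4; omega
        have hq2ba : q^2 = b^4 - a^4 := by rw [← hQ, ← hA4, ← hB4]; omega
        -- a is even
        have haeven : Even a := by
          by_contra hodd
          obtain ⟨a1, ha1⟩ := Int.not_even_iff_odd.mp hodd
          have hh : b^4 = a^4 + q^2 := by linarith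
          have h8 : ((b : ZMod 8))^4 = (2*(a1 : ZMod 8)+1)^4 + (2*(q1:ZMod 8)+1)^2 := by
            have hc := congrArg (fun n : ℤ => (n : ZMod 8)) hh
            push_cast [ha1, hq1] at hc
            exact hc
          exact zmod8_aux _ _ _ h8
        obtain ⟨a1, ha1⟩ := haeven
        have hcoaq : IsCoprime q (a^2) := by
          have h1 : IsCoprime (p^4) q := hco.pow_left
          have h2 : A ∣ p^4 := ⟨B, hABp.symm⟩
          have h3 : IsCoprime A q := h1.of_isCoprime_of_dvd_left h2
          rw [hA4] at h3
          exact (((IsCoprime.pow_left_iff (by norm_num)).mp h3).symm).pow_right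
        have htriple : PythagoreanTriple q (a^2) (b^2) := by
          show q*q + a^2*a^2 = b^2*b^2
          linear_combination hq2ba
        have hgcdqa : Int.gcd q (a^2) = 1 := Int.isCoprime_iff_gcd_eq_one.mp hcoaq
        obtain ⟨m, n, hforms, hzc, hmn, hpar⟩ :=
          PythagoreanTriple.coprime_classification.mp ⟨htriple, hgcdqa⟩
        rcases hforms with ⟨hqf, haf⟩ | ⟨hqf, haf⟩
        swap
        · obtain ⟨e, he⟩ : Even q := ⟨m*n, by rw [hqf]; ring⟩
          omega
        have hb2f : b^2 = m^2+n^2 := by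
          rcases hzc with hzc | hzc
          · exact hzc
          · exfalso
            have hb2pos : 0 < b^2 := by positivity
            nlinarith [sq_nonneg m, sq_nonneg n]
        have hmnpos : 0 < m*n := by
          have ha2pos : 0 < a^2 := by positivity
          linarith
        obtain ⟨m', n', hm', hn', hqf', haf', hb2f', hgcd', hpe⟩ :
            ∃ m' n' : ℤ, 0 < m' ∧ 0 < n' ∧ q = m'^2 - n'^2 ∧ a^2 = 2*m'*n' ∧
              b^2 = m'^2+n'^2 ∧ IsCoprime m' n' ∧ (Even m' ∨ Even n') := by
          have hmn' : IsCoprime m n := Int.isCoprime_iff_gcd_eq_one.mpr hmn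
          have hpe : Even m ∨ Even n := by
            rcases hpar with ⟨h1, _⟩ | ⟨_, h2⟩
            · exact Or.inl (Int.even_iff.mpr h1)
            · exact Or.inr (Int.even_iff.mpr h2)
          rcases mul_pos_iff.mp hmnpos with ⟨hm, hn⟩ | ⟨hm, hn⟩
          · exact ⟨m, n, hm, hn, hqf, haf, hb2f, hmn', hpe⟩
          · refine ⟨-m, -n, by linarith, by linarith, by rw [hqf]; ring, by rw [haf]; ring,
              by rw [hb2f]; ring, hmn'.neg_left.neg_right, ?_⟩
            rcases hpe with hh | hh
            · exact Or.inl hh.neg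
            · exact Or.inr hh.neg
        have hble : b.natAbs < N := by
          have hwab : w = a^4 + b^4 := by rw [hwAB, hA4, hB4]
          have hb1 : (1:ℤ) ≤ |b| := Int.one_le_abs hbne
          have habs4 : |b|^4 = b^4 := by
            rw [← abs_pow]; exact abs_of_nonneg (by positivity)
          have hb4 : |b| ≤ b^4 := by
            have := le_self_pow₀ hb1 (show 4 ≠ 0 by norm_num)
            rwa [habs4] at this
          have ha4pos : (0:ℤ) < a^4 := by positivity
          have hwb : |b| < w := by linarith
          have hnb : (b.natAbs : ℤ) < (w.natAbs : ℤ) := by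
            rw [Int.natAbs_of_nonneg hwpos.le]
            rw [← Int.abs_eq_natAbs]
            exact hwb
          have : b.natAbs < w.natAbs := by exact_mod_cast hnb
          omega
        rcases hpe with hme | hne
        · obtain ⟨m1, hm1⟩ := hme
          have ha1sq : a1^2 = m1 * n' := by
            apply mul_left_cancel₀ (show (4:ℤ) ≠ 0 by norm_num)
            calc 4*a1^2 = a^2 := by rw [ha1]; ring
            _ = 2*m'*n' := haf'
            _ = 4*(m1*n') := by rw [hm1]; ring
          have hm1pos : 0 < m1 := by omega
          have hcm : IsCoprime m1 n' := hgcd'.of_isCoprime_of_dvd_left ⟨2, by rw [hm1]; ring⟩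
          obtain ⟨c, _, hc⟩ := pos_sq_of_coprime hcm ha1sq.symm hm1pos
          obtain ⟨e, _, he⟩ := pos_sq_of_coprime hcm.symm
            (show n' * m1 = a1^2 by rw [mul_comm]; exact ha1sq.symm) hn'
          have hcne : c ≠ 0 := by rintro rfl; simp at hc; omega
          have hene : e ≠ 0 := by rintro rfl; simp at he; omega
          have hfin : e^4 + 4*c^4 = b^2 := by
            rw [hb2f', hm1, hc, he]; ring
          exact ih b.natAbs hble b c e le_rfl hcne hene hfin
        · obtain ⟨n1, hn1⟩ := hne
          have ha1sq : a1^2 = m' * n1 := by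
            apply mul_left_cancel₀ (show (4:ℤ) ≠ 0 by norm_num)
            calc 4*a1^2 = a^2 := by rw [ha1]; ring
            _ = 2*m'*n' := haf'
            _ = 4*(m'*n1) := by rw [hn1]; ring
          have hn1pos : 0 < n1 := by omega
          have hcm : IsCoprime m' n1 := (hgcd'.symm.of_isCoprime_of_dvd_left
            ⟨2, by rw [hn1]; ring⟩).symm
          obtain ⟨c, _, hc⟩ := pos_sq_of_coprime hcm.symm
            (show n1 * m' = a1^2 by rw [mul_comm]; exact ha1sq.symm) hn1pos
          obtain ⟨e, _, he⟩ := pos_sq_of_coprime hcm ha1sq.symm hm'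
          have hcne : c ≠ 0 := by rintro rfl; simp at hc; omega
          have hene : e ≠ 0 := by rintro rfl; simp at he; omega
          have hfin : e^4 + 4*c^4 = b^2 := by
            rw [hb2f', hn1, hc, he]; ring
          exact ih b.natAbs hble b c e le_rfl hcne hene hfin
    · -- non-coprime: divide out the gcd
      have hd0 : Int.gcd p q ≠ 0 := by
        intro h0
        rcases Int.gcd_eq_zero_iff.mp h0 with ⟨rfl, rfl⟩
        exact hp rfl
      set d : ℕ := Int.gcd p q with hdd
      have hd2 : 2 ≤ d := by omega
      obtain ⟨p1, hp1⟩ : (d:ℤ) ∣ p := Int.gcd_dvd_left p q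
      obtain ⟨q1, hq1⟩ : (d:ℤ) ∣ q := Int.gcd_dvd_right p q
      have hdvd : ((d:ℤ)^2)^2 ∣ w^2 := ⟨q1^4+4*p1^4, by rw [← hw2, hp1, hq1]; ring⟩
      have hdvd2 : (d:ℤ)^2 ∣ w := (Int.pow_dvd_pow_iff two_ne_zero).mp hdvd
      obtain ⟨w1, hw1⟩ := hdvd2
      have hdne : ((d:ℤ)^2)^2 ≠ 0 := by positivity
      have h' : q1^4 + 4*p1^4 = w1^2 := by
        apply mul_left_cancel₀ hdne
        rw [hp1, hq1, hw1] at hw2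
        ring_nf; ring_nf at hw2; linarith
      have hp1ne : p1 ≠ 0 := by rintro rfl; rw [mul_zero] at hp1; exact hp hp1
      have hq1ne : q1 ≠ 0 := by rintro rfl; rw [mul_zero] at hq1; exact hq hq1
      have hw1ne : w1 ≠ 0 := by rintro rfl; rw [mul_zero] at hw1; omega
      have hlt : w1.natAbs < N := by
        have hnA : w.natAbs = d^2 * w1.natAbs := by
          rw [hw1, Int.natAbs_mul, Int.natAbs_pow]; simp
        have h4 : 4 ≤ d^2 := by nlinarith
        have h1 : 1 ≤ w1.natAbs := by omega
        have : 4 * w1.natAbs ≤ d^2 * w1.natAbs := Nat.mul_le_mul_right _ h4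
        omega
      exact ih w1.natAbs hlt w1 p1 q1 le_rfl hp1ne hq1ne h'

private lemma ratsq_int {N : ℤ} {s : ℚ} (h : s^2 = (N:ℚ)) : ∃ m : ℤ, m^2 = N := by
  have hden : s.den = 1 := by
    have h1 : (s^2).den = 1 := by rw [h]; exact Rat.den_intCast N
    rw [Rat.den_pow] at h1
    by_contra hne
    have h3 : 2 ≤ s.den := by have := s.den_pos; omega
    have h4 : 2^2 ≤ s.den^2 := Nat.pow_le_pow_left h3 2
    omega
  refine ⟨s.num, ?_⟩
  have hs : (s.num : ℚ) = s := (Rat.den_eq_one_iff s).mp hden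
  have : ((s.num : ℚ))^2 = (N:ℚ) := by rw [hs]; exact h
  exact_mod_cast this

private lemma not_sq_two : ¬ ∃ s : ℚ, (2:ℚ) = s^2 := by
  rintro ⟨s, hs⟩
  obtain ⟨m, hm⟩ := ratsq_int (N := 2) (by rw [← hs]; norm_num)
  exact Z1 m.natAbs m 0 1 le_rfl (Or.inr one_ne_zero) (by rw [hm]; ring)

private lemma two_usq_ne_one (u : ℚ) : 2*u^2 - 1 ≠ 0 := by
  intro h0
  exact not_sq_two ⟨2*u, by linear_combination -2*h0⟩

private lemma num_eq (u : ℚ) : (u.num:ℚ) = u * (u.den:ℚ) :=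
  (div_eq_iff (by exact_mod_cast u.den_nz)).mp (Rat.num_div_den u)

private lemma not_sq_fermat (u : ℚ) (hu : u ≠ 0) : ¬ ∃ s : ℚ, 4*u^4+1 = s^2 := by
  rintro ⟨s, hs⟩
  have hud : ((u.den:ℤ):ℚ) ≠ 0 := by
    exact_mod_cast Nat.cast_ne_zero.mpr u.den_nz
  have key : (s*((u.den:ℤ):ℚ)^2)^2 = ((4*u.num^4 + (u.den:ℤ)^4 : ℤ):ℚ) := by
    push_cast
    rw [num_eq u]
    push_cast
    linear_combination (((u.den:ℚ))^4) * hs.symm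
  obtain ⟨m, hm⟩ := ratsq_int key
  exact Z2 m.natAbs m u.num (u.den:ℤ) le_rfl (Rat.num_ne_zero.mpr hu)
    (by exact_mod_cast u.den_nz) (by linarith)

private lemma not_sq_8 (u : ℚ) : ¬ ∃ s : ℚ, 32*u^4+8 = s^2 := by
  rintro ⟨s, hs⟩
  have key : (s*((u.den:ℤ):ℚ)^2)^2 = ((32*u.num^4 + 8*(u.den:ℤ)^4 : ℤ):ℚ) := by
    push_cast
    rw [num_eq u]
    push_cast
    linear_combination (((u.den:ℚ))^4) * hs.symm
  obtain ⟨m, hm⟩ := ratsq_int key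
  have hme : Even m := by
    have : Even (m^2) := ⟨16*u.num^4+4*(u.den:ℤ)^4, by rw [hm]; ring⟩
    exact (Int.even_pow.mp this).1
  obtain ⟨m1, hm1⟩ := hme
  have h' : m1^2 = 2*(4*u.num^4+(u.den:ℤ)^4) := by
    apply mul_left_cancel₀ (show (4:ℤ) ≠ 0 by norm_num)
    rw [hm1] at hm; ring_nf; ring_nf at hm; linarith
  exact Z1 m1.natAbs m1 u.num (u.den:ℤ) le_rfl
    (Or.inr (by exact_mod_cast u.den_nz)) h'

/-- The elliptic curve `Y² = X(X + 32u⁴ + 8)(X + 16u⁴ - 16u² + 4)` as a Weierstrass curve: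
expanding the right-hand side gives `X³ + a₂X² + a₄X` with `a₂ = (32u⁴+8) + (16u⁴-16u²+4)`
and `a₄ = (32u⁴+8)(16u⁴-16u²+4)`. -/
noncomputable def curveE (u : ℚ) : WeierstrassCurve.Affine ℚ :=
  { a₁ := 0, a₂ := (32 * u ^ 4 + 8) + (16 * u ^ 4 - 16 * u ^ 2 + 4), a₃ := 0,
    a₄ := (32 * u ^ 4 + 8) * (16 * u ^ 4 - 16 * u ^ 2 + 4), a₆ := 0 }

namespace CurveAux

open WeierstrassCurve.Affine WeierstrassCurve.Affine.Point

private lemma negY_eq (u x y : ℚ) : (curveE u).negY x y = -y := by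
  simp [WeierstrassCurve.Affine.negY, curveE]

private lemma eqn_of {u x y : ℚ} (h : (curveE u).Nonsingular x y) :
    y^2 = x^3 + ((32*u^4+8) + (16*u^4-16*u^2+4))*x^2
      + ((32*u^4+8)*(16*u^4-16*u^2+4))*x := by
  have he := ((curveE u).equation_iff x y).mp h.1
  simp only [curveE] at he
  linear_combination he

private lemma nonsingP (u : ℚ) (hu : u ≠ 0) :
    (curveE u).Nonsingular (-4 * (4 * u ^ 4 + 1)) (16 * u * (4 * u ^ 4 + 1)) := by
  rw [(curveE u).nonsingular_iff, (curveE u).equation_iff]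
  constructor
  · simp only [curveE]; ring
  · right
    simp only [curveE]
    intro hcon
    have h4 : (0:ℚ) < 4*u^4+1 := by positivity
    have hz : u * (4*u^4+1) = 0 := by linarith
    rcases mul_eq_zero.mp hz with h | h
    · exact hu h
    · linarith

private lemma two_torsion {u x y : ℚ} (h : (curveE u).Nonsingular x y)
    (h2 : (Point.some _ _ h) + (Point.some _ _ h) = (0 : (curveE u).Point)) :
    y = 0 ∧ (x = 0 ∨ x = -(32*u^4+8) ∨ x = -(16*u^4-16*u^2+4)) := by
  by_cases hy : y = (curveE u).negY x y
  case neg =>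
    exfalso
    rw [add_self_of_Y_ne hy] at h2
    exact some_ne_zero _ h2
  have hy0 : y = 0 := by rw [negY_eq] at hy; linarith
  refine ⟨hy0, ?_⟩
  have he := eqn_of h
  rw [hy0] at he
  have hz : x * ((x + (32*u^4+8)) * (x + (16*u^4-16*u^2+4))) = 0 := by
    linear_combination -he
  rcases mul_eq_zero.mp hz with h1 | h1
  · exact Or.inl h1
  rcases mul_eq_zero.mp h1 with h1 | h1
  · exact Or.inr (Or.inl (by linarith))
  · exact Or.inr (Or.inr (by linarith))

private lemma double_sq {u x y : ℚ} (hS : (curveE u).Nonsingular x y)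
    (T : (curveE u).Point) (hT : T + T = Point.some _ _ hS) :
    (∃ s:ℚ, x = s^2) ∧ (∃ s:ℚ, x + (32*u^4+8) = s^2) ∧
      (∃ s:ℚ, x + (16*u^4-16*u^2+4) = s^2) := by
  rcases T with _ | @⟨t, s, hT'⟩
  · exfalso
    have h00 : (WeierstrassCurve.Affine.Point.zero : (curveE u).Point) = 0 := rfl
    rw [h00, add_zero] at hT
    exact some_ne_zero hS hT.symm
  · by_cases hy : s = (curveE u).negY t s
    · exfalso
      rw [add_self_of_Y_eq hy] at hT
      exact some_ne_zero hS hT.symm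
    · have hs0 : s ≠ 0 := by
        intro h0
        apply hy
        rw [negY_eq, h0]; ring
      rw [add_self_of_Y_ne hy] at hT
      rw [WeierstrassCurve.Affine.Point.some.injEq] at hT
      obtain ⟨hx, -⟩ := hT
      rw [slope_of_Y_ne rfl hy] at hx
      rw [negY_eq] at hx
      have heq : s^2 = t^3 + ((32*u^4+8) + (16*u^4-16*u^2+4))*t^2
          + ((32*u^4+8)*(16*u^4-16*u^2+4))*t := eqn_of hT'
      simp only [WeierstrassCurve.Affine.addX, curveE] at hx
      have h2s : (2*s) ≠ 0 := by intro hc; apply hs0; linarith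
      have hx4 : x * (2*s)^2 =
          (3*t^2 + 2*((32*u^4+8) + (16*u^4-16*u^2+4))*t
            + (32*u^4+8)*(16*u^4-16*u^2+4))^2
          - (((32*u^4+8) + (16*u^4-16*u^2+4)) + 2*t)*(2*s)^2 := by
        rw [← hx, show s - -s = 2*s from by ring]
        field_simp
        ring
      refine ⟨⟨(t^2 - (32*u^4+8)*(16*u^4-16*u^2+4))/(2*s), ?_⟩,
        ⟨(t^2 + 2*(32*u^4+8)*t + (32*u^4+8)*(16*u^4-16*u^2+4))/(2*s), ?_⟩,
        ⟨(t^2 + 2*(16*u^4-16*u^2+4)*t + (32*u^4+8)*(16*u^4-16*u^2+4))/(2*s), ?_⟩⟩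
      · rw [div_pow, eq_div_iff (pow_ne_zero 2 h2s)]
        linear_combination hx4 + (-4*(((32*u^4+8) + (16*u^4-16*u^2+4)) + 2*t)) * heq
      · rw [div_pow, eq_div_iff (pow_ne_zero 2 h2s), add_mul]
        linear_combination hx4 + (4*(32*u^4+8) - 4*((32*u^4+8) + (16*u^4-16*u^2+4)) - 8*t) * heq
      · rw [div_pow, eq_div_iff (pow_ne_zero 2 h2s), add_mul]
        linear_combination hx4 + (4*(16*u^4-16*u^2+4) - 4*((32*u^4+8) + (16*u^4-16*u^2+4)) - 8*t) * heq

private lemma main (u : ℚ) (hu : u ≠ 0)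
    (hfin : IsOfFinAddOrder (Point.some _ _ (nonsingP u hu))) : False := by
  set Pt : (curveE u).Point := Point.some _ _ (nonsingP u hu) with hPtdef
  have hnpos : 0 < addOrderOf Pt := addOrderOf_pos_iff.mpr hfin
  set n := addOrderOf Pt with hndef
  have hnP : n • Pt = 0 := addOrderOf_nsmul_eq_zero Pt
  have h4pos : (0:ℚ) < 4*u^4+1 := by positivity
  have h2u : 2*u^2 - 1 ≠ 0 := two_usq_ne_one u
  rcases Nat.even_or_odd n with ⟨j, hj⟩ | ⟨j, hj⟩
  · -- n even
    have hj0 : 0 < j := by omega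
    have hR0 : j • Pt ≠ 0 := by
      intro h0
      have hdvd : n ∣ j := addOrderOf_dvd_iff_nsmul_eq_zero.mpr h0
      have := Nat.le_of_dvd hj0 hdvd
      omega
    have hR2 : (j • Pt) + (j • Pt) = 0 := by
      rw [← add_nsmul, ← hj]; exact hnP
    rcases hRdef : j • Pt with _ | @⟨r0, r1, hR⟩
    · exact hR0 (by rw [hRdef]; rfl)
    rw [hRdef] at hR2
    obtain ⟨hr1, hr0s⟩ := two_torsion hR hR2
    subst hr1
    rcases Nat.even_or_odd j with ⟨i, hi⟩ | ⟨i, hi⟩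
    · -- 4 ∣ n : R itself is a double
      have hRR : (i • Pt) + (i • Pt) = Point.some _ _ hR := by
        rw [← add_nsmul, ← hi, hRdef]
      obtain ⟨⟨s1, hs1⟩, ⟨s2, hs2⟩, -⟩ := double_sq hR _ hRR
      rcases hr0s with h0 | h0 | h0
      · rw [h0] at hs2
        exact not_sq_8 u ⟨s2, by linarith⟩
      · rw [h0] at hs1
        have hb : (0:ℚ) < 32*u^4+8 := by positivity
        nlinarith [sq_nonneg s1]
      · rw [h0] at hs1
        have hc : (0:ℚ) < (2*u^2-1)^2 := by positivity
        nlinarith [sq_nonneg s1]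
    · -- n ≡ 2 (mod 4) : P + R is a double
      have hST : ((i+1) • Pt) + ((i+1) • Pt) = Pt + (Point.some _ _ hR) := by
        rw [← add_nsmul, ← hRdef]
        have h1 : (i+1) + (i+1) = 1 + j := by omega
        rw [h1, add_nsmul, one_nsmul]
      rcases hr0s with h0 | h0 | h0 <;> subst h0
      · -- r0 = 0
        have hne : (-4*(4*u^4+1) : ℚ) ≠ 0 := by nlinarith
        rw [hPtdef, add_of_X_ne hne] at hST
        obtain ⟨⟨s1, hs1⟩, -, -⟩ := double_sq _ _ hST
        have hX : (curveE u).addX (-4*(4*u^4+1)) 0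
            ((curveE u).slope (-4*(4*u^4+1)) 0 (16*u*(4*u^4+1)) 0) = -8*(2*u^2-1)^2 := by
          rw [slope_of_X_ne hne]
          simp only [WeierstrassCurve.Affine.addX, curveE]
          field_simp
          ring
        rw [hX] at hs1
        have hc : (0:ℚ) < (2*u^2-1)^2 := by positivity
        nlinarith [sq_nonneg s1]
      · -- r0 = -(32u⁴+8)
        have hne : (-4*(4*u^4+1) : ℚ) ≠ -(32*u^4+8) := by
          intro h; nlinarith
        rw [hPtdef, add_of_X_ne hne] at hST
        obtain ⟨-, ⟨s2, hs2⟩, -⟩ := double_sq _ _ hST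
        have hX : (curveE u).addX (-4*(4*u^4+1)) (-(32*u^4+8))
            ((curveE u).slope (-4*(4*u^4+1)) (-(32*u^4+8)) (16*u*(4*u^4+1)) 0)
            = 32*u^2 := by
          rw [slope_of_X_ne hne]
          simp only [WeierstrassCurve.Affine.addX, curveE]
          rw [show (-4*(4*u^4+1) - -(32*u^4+8) : ℚ) = 16*u^4+4 from by ring]
          have hd : (16*u^4+4 : ℚ) ≠ 0 := by positivity
          field_simp
          ring
        rw [hX] at hs2
        apply not_sq_two
        refine ⟨s2/(2*(2*u^2+1)), ?_⟩
        have h21 : (2*(2*u^2+1) : ℚ) ≠ 0 := by positivity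
        rw [div_pow, eq_div_iff (pow_ne_zero 2 h21)]
        linear_combination hs2
      · -- r0 = -(16u⁴-16u²+4)
        have hu2 : u^2 ≠ 0 := pow_ne_zero 2 hu
        have hne : (-4*(4*u^4+1) : ℚ) ≠ -(16*u^4-16*u^2+4) := by
          intro h; apply hu2; linarith
        rw [hPtdef, add_of_X_ne hne] at hST
        obtain ⟨⟨s1, hs1⟩, -, -⟩ := double_sq _ _ hST
        have hX : (curveE u).addX (-4*(4*u^4+1)) (-(16*u^4-16*u^2+4))
            ((curveE u).slope (-4*(4*u^4+1)) (-(16*u^4-16*u^2+4)) (16*u*(4*u^4+1)) 0)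
            = (2*u^2-1)^2*(4*u^4+1)/u^2 := by
          rw [slope_of_X_ne hne]
          simp only [WeierstrassCurve.Affine.addX, curveE]
          rw [show (-4*(4*u^4+1) - -(16*u^4-16*u^2+4) : ℚ) = -(16*u^2) from by ring]
          have hd : (-(16*u^2) : ℚ) ≠ 0 := by
            simp only [neg_ne_zero]
            positivity
          field_simp
          ring
        rw [hX] at hs1
        have hs1' : (2*u^2-1)^2*(4*u^4+1) = s1^2*u^2 := by
          field_simp at hs1
          linear_combination hs1
        apply not_sq_fermat u hu
        refine ⟨s1*u/(2*u^2-1), ?_⟩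
        rw [div_pow, eq_div_iff (pow_ne_zero 2 h2u)]
        linear_combination hs1'
  · -- n odd
    have hT : ((j+1) • Pt) + ((j+1) • Pt) = Pt := by
      rw [← add_nsmul]
      have h1 : (j+1) + (j+1) = n+1 := by omega
      rw [h1, add_nsmul, one_nsmul, hnP, zero_add]
    rw [hPtdef] at hT
    obtain ⟨⟨s, hs⟩, -, -⟩ := double_sq _ _ hT
    nlinarith [sq_nonneg s]

end CurveAux

/-- For every nonzero rational `u`, the point `P = (-4(4u⁴+1), 16u(4u⁴+1))` is a (nonsingular)
rational point on `Y² = X(X + 32u⁴ + 8)(X + 16u⁴ - 16u² + 4)` of infinite order. -/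
theorem point_P_on_curveE_infinite_order (u : ℚ) (hu : u ≠ 0) :
    ∃ h : (curveE u).Nonsingular (-4 * (4 * u ^ 4 + 1)) (16 * u * (4 * u ^ 4 + 1)),
      ¬ IsOfFinAddOrder (WeierstrassCurve.Affine.Point.some _ _ h) := by
  exact ⟨CurveAux.nonsingP u hu, fun hfin => CurveAux.main u hu hfin⟩
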